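/- Discrete nonlocal thin-plate variational identity (Eq. (63)): in the discrete nonlocal setting, let h : I × I → ℝ^{2×2} (Hessian vectors), ω : I × I → ℝ, q : I → ℝ, and constants D₀ and ν. For a deflection field w : I → ℝ define the nonlocal curvature κ_i(w) := ∑_{j∈S(i)} ω(i,j)·(w(j)−w(i))·h(i,j)·V(j), the moment tensor M_i := D₀·( ν·tr(κ_i)·𝟙_2 + (1−ν)·κ_i ), and the total energy E(w) := ∑_{i∈I} ( (1/2)·M_i : κ_i − q(i)·w(i) )·V(i), where A : B := ∑_{a,b} A_{ab}·B_{ab}. Then for every variation δ : I → ℝ, (d/dt)E(w + t·δ)|_{t=0} = ∑_{i∈I} ( ∑_{j∈S'(i)} ω(j,i)·(M_j : h(j,i))·V(j) − ∑_{j∈S(i)} ω(i,j)·(M_i : h(i,j))·V(j) − q(i) )·δ(i)·V(i). Consequently w is a critical point of E if and only if for every i ∈ I: ∑_{j∈S(i)} ω(i,j)·(M_i : h(i,j))·V(j) − ∑_{j∈S'(i)} ω(j,i)·(M_j : h(j,i))·V(j) + q(i) = 0. -/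

import Mathlib

open Finset Matrix

private lemma sum_support_swap {I : Type*} [Fintype I] [DecidableEq I]
    (S : I → Finset I) (f : I → I → ℝ) :
    ∑ i, ∑ j ∈ S i, f i j
      = ∑ j, ∑ i ∈ Finset.univ.filter (fun i => j ∈ S i), f i j := by
  have h1 : ∀ i, ∑ j ∈ S i, f i j = ∑ j, if j ∈ S i then f i j else 0 := fun i => by
    rw [Finset.sum_ite_mem, Finset.univ_inter]
  simp_rw [h1, Finset.sum_filter]
  exact Finset.sum_comm

private lemma frob_add_left (A B C : Matrix (Fin 2) (Fin 2) ℝ) :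
    ∑ a, ∑ c, (A + B) a c * C a c
      = (∑ a, ∑ c, A a c * C a c) + ∑ a, ∑ c, B a c * C a c := by
  simp [Matrix.add_apply, add_mul, Finset.sum_add_distrib]

private lemma frob_add_right (A B C : Matrix (Fin 2) (Fin 2) ℝ) :
    ∑ a, ∑ c, A a c * (B + C) a c
      = (∑ a, ∑ c, A a c * B a c) + ∑ a, ∑ c, A a c * C a c := by
  simp [Matrix.add_apply, mul_add, Finset.sum_add_distrib]

private lemma frob_smul_left (t : ℝ) (A B : Matrix (Fin 2) (Fin 2) ℝ) :
    ∑ a, ∑ c, (t • A) a c * B a c = t * ∑ a, ∑ c, A a c * B a c := by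
  simp only [Matrix.smul_apply, smul_eq_mul, Finset.mul_sum]
  refine Finset.sum_congr rfl fun a _ => Finset.sum_congr rfl fun c _ => by ring

private lemma frob_smul_right (t : ℝ) (A B : Matrix (Fin 2) (Fin 2) ℝ) :
    ∑ a, ∑ c, A a c * (t • B) a c = t * ∑ a, ∑ c, A a c * B a c := by
  simp only [Matrix.smul_apply, smul_eq_mul, Finset.mul_sum]
  refine Finset.sum_congr rfl fun a _ => Finset.sum_congr rfl fun c _ => by ring

private lemma frob_symm (A B : Matrix (Fin 2) (Fin 2) ℝ) :
    ∑ a, ∑ c, A a c * B a c = ∑ a, ∑ c, B a c * A a c := by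
  simp [mul_comm]

private lemma frob_one (B : Matrix (Fin 2) (Fin 2) ℝ) :
    ∑ a, ∑ c, (1 : Matrix (Fin 2) (Fin 2) ℝ) a c * B a c = Matrix.trace B := by
  simp [Matrix.one_apply, ite_mul, Matrix.trace, Matrix.diag]

private lemma frob_sum_right {I : Type*} (A : Matrix (Fin 2) (Fin 2) ℝ) (s : Finset I)
    (cc : I → ℝ) (H : I → Matrix (Fin 2) (Fin 2) ℝ) :
    ∑ a, ∑ c, A a c * (∑ j ∈ s, cc j • H j) a c
      = ∑ j ∈ s, cc j * ∑ a, ∑ c, A a c * H j a c := by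
  simp only [Matrix.sum_apply, Matrix.smul_apply, smul_eq_mul, Finset.mul_sum]
  conv_lhs => enter [2, a]; rw [Finset.sum_comm]
  rw [Finset.sum_comm]
  refine Finset.sum_congr rfl fun j _ => Finset.sum_congr rfl fun a _ =>
    Finset.sum_congr rfl fun c _ => by ring

/-- Discrete nonlocal thin-plate variational identity (Eq. (63)). -/
theorem nonlocal_thin_plate_variational {I : Type*} [Fintype I] [DecidableEq I]
    (V : I → ℝ) (hV : ∀ i, 0 < V i)
    (S : I → Finset I)
    (h : I → I → Matrix (Fin 2) (Fin 2) ℝ)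
    (ω : I → I → ℝ) (q : I → ℝ) (D0 ν : ℝ)
    (κ : (I → ℝ) → I → Matrix (Fin 2) (Fin 2) ℝ)
    (hκ : ∀ w i, κ w i = ∑ j ∈ S i, (ω i j * (w j - w i) * V j) • h i j)
    (M : (I → ℝ) → I → Matrix (Fin 2) (Fin 2) ℝ)
    (hM : ∀ w i, M w i = (D0 * (ν * Matrix.trace (κ w i))) • (1 : Matrix (Fin 2) (Fin 2) ℝ)
        + (D0 * (1 - ν)) • κ w i)
    (E : (I → ℝ) → ℝ)
    (hE : ∀ w, E w = ∑ i, ((1 / 2) * (∑ a, ∑ c, M w i a c * κ w i a c) - q i * w i) * V i)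
    (w : I → ℝ) :
    (∀ δ : I → ℝ,
        HasDerivAt (fun t : ℝ => E (w + t • δ))
          (∑ i, ((∑ j ∈ univ.filter (fun j => i ∈ S j),
                ω j i * (∑ a, ∑ c, M w j a c * h j i a c) * V j)
              - (∑ j ∈ S i, ω i j * (∑ a, ∑ c, M w i a c * h i j a c) * V j)
              - q i) * δ i * V i) 0)
    ∧ ((∀ δ : I → ℝ, deriv (fun t : ℝ => E (w + t • δ)) 0 = 0)
        ↔ ∀ i, (∑ j ∈ S i, ω i j * (∑ a, ∑ c, M w i a c * h i j a c) * V j)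
              - (∑ j ∈ univ.filter (fun j => i ∈ S j),
                  ω j i * (∑ a, ∑ c, M w j a c * h j i a c) * V j)
              + q i = 0) := by
  classical
  have key : ∀ δ : I → ℝ,
      HasDerivAt (fun t : ℝ => E (w + t • δ))
        (∑ i, ((∑ j ∈ univ.filter (fun j => i ∈ S j),
              ω j i * (∑ a, ∑ c, M w j a c * h j i a c) * V j)
            - (∑ j ∈ S i, ω i j * (∑ a, ∑ c, M w i a c * h i j a c) * V j)
            - q i) * δ i * V i) 0 := by
    intro δ
    set K' : I → Matrix (Fin 2) (Fin 2) ℝ :=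
      fun i => ∑ j ∈ S i, (ω i j * (δ j - δ i) * V j) • h i j with hK'
    set M2 : I → Matrix (Fin 2) (Fin 2) ℝ :=
      fun i => (D0 * (ν * Matrix.trace (K' i))) • (1 : Matrix (Fin 2) (Fin 2) ℝ)
        + (D0 * (1 - ν)) • K' i with hM2
    have hκt : ∀ (t : ℝ) (i : I), κ (w + t • δ) i = κ w i + t • K' i := by
      intro t i
      rw [hκ, hκ]
      simp only [hK']
      rw [Finset.smul_sum, ← Finset.sum_add_distrib]
      refine Finset.sum_congr rfl fun j _ => ?_
      rw [smul_smul, ← add_smul]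
      congr 1
      simp only [Pi.add_apply, Pi.smul_apply, smul_eq_mul]
      ring
    have hMt : ∀ (t : ℝ) (i : I), M (w + t • δ) i = M w i + t • M2 i := by
      intro t i
      rw [hM, hM, hκt]
      simp only [hM2]
      rw [Matrix.trace_add, Matrix.trace_smul]
      ext a b
      simp only [Matrix.add_apply, Matrix.smul_apply, Matrix.one_apply, smul_eq_mul,
        mul_ite, mul_one, mul_zero]
      split_ifs <;> ring
    set Bv : ℝ := ∑ i, ((1 / 2) * ((∑ a, ∑ c, M w i a c * K' i a c)
        + (∑ a, ∑ c, M2 i a c * κ w i a c)) - q i * δ i) * V i with hBvdef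
    set Cv : ℝ := ∑ i, ((1 / 2) * (∑ a, ∑ c, M2 i a c * K' i a c)) * V i with hCvdef
    have hEt : ∀ t : ℝ, E (w + t • δ) = E w + t * Bv + t ^ 2 * Cv := by
      intro t
      rw [hE, hE, hBvdef, hCvdef, Finset.mul_sum, Finset.mul_sum,
        ← Finset.sum_add_distrib, ← Finset.sum_add_distrib]
      refine Finset.sum_congr rfl fun i _ => ?_
      rw [hκt, hMt, frob_add_left, frob_smul_left, frob_add_right, frob_add_right,
        frob_smul_right, frob_smul_right]
      simp only [Pi.add_apply, Pi.smul_apply, smul_eq_mul]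
      ring
    have hpoly : HasDerivAt (fun t : ℝ => E w + t * Bv + t ^ 2 * Cv) Bv 0 := by
      have h2 : HasDerivAt (fun t : ℝ => t * Bv) Bv 0 := by
        simpa using (hasDerivAt_id (0 : ℝ)).mul_const Bv
      have h3 : HasDerivAt (fun t : ℝ => t ^ 2 * Cv) 0 0 := by
        simpa using (hasDerivAt_pow 2 (0 : ℝ)).mul_const Cv
      have h4 := (h2.const_add (E w)).add h3
      rw [add_zero] at h4
      exact h4
    have hfun : (fun t : ℝ => E (w + t • δ)) = fun t : ℝ => E w + t * Bv + t ^ 2 * Cv :=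
      funext hEt
    have hsym : ∀ i, (∑ a, ∑ c, M2 i a c * κ w i a c)
        = ∑ a, ∑ c, M w i a c * K' i a c := by
      intro i
      simp only [hM2]
      conv_rhs => rw [hM]
      rw [frob_add_left, frob_smul_left, frob_smul_left, frob_one,
        frob_add_left, frob_smul_left, frob_smul_left, frob_one,
        frob_symm (K' i) (κ w i)]
      ring
    have hBv1 : Bv = ∑ i, ((∑ j ∈ S i, (ω i j * (δ j - δ i) * V j)
        * (∑ a, ∑ c, M w i a c * h i j a c)) - q i * δ i) * V i := by
      rw [hBvdef]
      refine Finset.sum_congr rfl fun i _ => ?_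
      rw [hsym i]
      simp only [hK']
      rw [frob_sum_right]
      ring
    have hstep1 : Bv = (∑ i, ∑ j ∈ S i,
          ω i j * (∑ a, ∑ c, M w i a c * h i j a c) * V j * V i * δ j)
        + ∑ i, (-(∑ j ∈ S i, ω i j * (∑ a, ∑ c, M w i a c * h i j a c) * V j) - q i)
            * δ i * V i := by
      rw [hBv1, ← Finset.sum_add_distrib]
      refine Finset.sum_congr rfl fun i _ => ?_
      have e1 : (∑ j ∈ S i, (ω i j * (δ j - δ i) * V j)
            * (∑ a, ∑ c, M w i a c * h i j a c)) * V i
          = (∑ j ∈ S i, ω i j * (∑ a, ∑ c, M w i a c * h i j a c) * V j * V i * δ j)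
            - (∑ j ∈ S i, ω i j * (∑ a, ∑ c, M w i a c * h i j a c) * V j)
              * (δ i * V i) := by
        rw [Finset.sum_mul, Finset.sum_mul, ← Finset.sum_sub_distrib]
        exact Finset.sum_congr rfl fun j _ => by ring
      rw [sub_mul, e1]
      ring
    have hswap := sum_support_swap S
      (fun i j => ω i j * (∑ a, ∑ c, M w i a c * h i j a c) * V j * V i * δ j)
    have hstep2 : (∑ j, ∑ i ∈ univ.filter (fun i => j ∈ S i),
          ω i j * (∑ a, ∑ c, M w i a c * h i j a c) * V j * V i * δ j)
        = ∑ i, (∑ j ∈ univ.filter (fun j => i ∈ S j),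
            ω j i * (∑ a, ∑ c, M w j a c * h j i a c) * V j) * δ i * V i := by
      refine Finset.sum_congr rfl fun i _ => ?_
      rw [Finset.sum_mul, Finset.sum_mul]
      exact Finset.sum_congr rfl fun j _ => by ring
    have hBfinal : Bv = ∑ i, ((∑ j ∈ univ.filter (fun j => i ∈ S j),
          ω j i * (∑ a, ∑ c, M w j a c * h j i a c) * V j)
        - (∑ j ∈ S i, ω i j * (∑ a, ∑ c, M w i a c * h i j a c) * V j)
        - q i) * δ i * V i := by
      rw [hstep1, hswap, hstep2, ← Finset.sum_add_distrib]
      exact Finset.sum_congr rfl fun i _ => by ring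
    rw [hfun, ← hBfinal]
    exact hpoly
  refine ⟨key, ?_⟩
  have hd : ∀ δ : I → ℝ, deriv (fun t : ℝ => E (w + t • δ)) 0
      = ∑ i, ((∑ j ∈ univ.filter (fun j => i ∈ S j),
            ω j i * (∑ a, ∑ c, M w j a c * h j i a c) * V j)
          - (∑ j ∈ S i, ω i j * (∑ a, ∑ c, M w i a c * h i j a c) * V j)
          - q i) * δ i * V i := fun δ => (key δ).deriv
  constructor
  · intro H i0
    have h0 := H (fun i => if i = i0 then (1 : ℝ) else 0)
    rw [hd] at h0
    rw [Finset.sum_eq_single i0 (fun b _ hb => by simp [hb]) (fun habs => absurd (mem_univ i0) habs)] at h0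
    simp only [if_pos rfl, if_true, mul_one] at h0
    have hVne : V i0 ≠ 0 := (hV i0).ne'
    have h1 : ((∑ j ∈ univ.filter (fun j => i0 ∈ S j),
          ω j i0 * (∑ a, ∑ c, M w j a c * h j i0 a c) * V j)
        - (∑ j ∈ S i0, ω i0 j * (∑ a, ∑ c, M w i0 a c * h i0 j a c) * V j)
        - q i0) = 0 := by
      rcases mul_eq_zero.mp h0 with h2 | h2
      · exact h2
      · exact absurd h2 hVne
    linarith
  · intro H δ
    rw [hd]
    refine Finset.sum_eq_zero fun i _ => ?_
    have h1 : ((∑ j ∈ univ.filter (fun j => i ∈ S j),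
          ω j i * (∑ a, ∑ c, M w j a c * h j i a c) * V j)
        - (∑ j ∈ S i, ω i j * (∑ a, ∑ c, M w i a c * h i j a c) * V j)
        - q i) = 0 := by linarith [H i]
    rw [h1, zero_mul, zero_mul]
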